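/- Let 0 < rμ < 1, m ≥ 1, δ = ((1-rμ)/m)^{1/(rμ)}, and t = ⌊((1-rμ)/(rμ))·ln((1-rμ)/(mδ))⌋ + 1. Suppose a nonnegative function c on links starts at c(e) = δ for all e, only increases, satisfies ∑_e c(e) ≤ 1 at the end, and is multiplied by at least (1+μ) for every group of w paths routed through e. Then the total number of paths routed through any single link e during the phase is at most w · log_{1+μ}(1/δ), and moreover w·log_{1+μ}(1/δ) ≤ w·t·R whenever μ = 1-(r/R)^{1/3} with 0 < r < R < 1. -/

import Mathlib

set_option maxHeartbeats 1000000


/-- The counting step of Theorem 1: if the congestion of a link starts at `δ`, ends at most `1`,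
and is multiplied by at least `(1+μ)` for every group of `w` paths routed through the link, then
at most `w·log_{1+μ}(1/δ)` paths were routed through it; moreover `w·log_{1+μ}(1/δ) ≤ w·t·R`
for the protocol's choice of parameters `μ`, `δ`, `t`. -/
theorem stmt_5 (m : ℕ) (hm : 1 ≤ m) (w r R μ δ : ℝ) (t : ℕ)
    (hw : 0 < w) (hr : 0 < r) (hrR : r < R) (hR : R < 1)
    (hμ : μ = 1 - (r / R) ^ ((1 : ℝ) / 3))
    (hδ : δ = ((1 - r * μ) / m) ^ ((1 : ℝ) / (r * μ)))
    (ht : t = ⌊(1 - r * μ) / (r * μ) * Real.log ((1 - r * μ) / (m * δ))⌋₊ + 1) :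
    (∀ N : ℝ, 0 ≤ N → δ * (1 + μ) ^ (N / w) ≤ 1 →
        N ≤ w * (Real.log (1 / δ) / Real.log (1 + μ))) ∧
      w * (Real.log (1 / δ) / Real.log (1 + μ)) ≤ w * t * R := by
  have hR0 : 0 < R := hr.trans hrR
  have hrR0 : (0:ℝ) < r / R := div_pos hr hR0
  have hrR1 : r / R < 1 := (div_lt_one hR0).mpr hrR
  have hb : (r / R) ^ ((1 : ℝ) / 3) < 1 :=
    Real.rpow_lt_one hrR0.le hrR1 (by norm_num)
  have hbpos : (0:ℝ) < (r / R) ^ ((1 : ℝ) / 3) := Real.rpow_pos_of_pos hrR0 _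
  have hμ0 : 0 < μ := by rw [hμ]; linarith
  have hμ1 : μ < 1 := by rw [hμ]; linarith
  -- (1-μ)^3 = r/R
  have hcube : (1 - μ) ^ 3 = r / R := by
    have h1 : (1 : ℝ) - μ = (r / R) ^ ((1:ℝ)/3) := by rw [hμ]; ring
    rw [h1, ← Real.rpow_natCast ((r / R) ^ ((1:ℝ)/3)) 3, ← Real.rpow_mul hrR0.le]
    norm_num
  set x := r * μ with hxdef
  have hx0 : 0 < x := mul_pos hr hμ0
  have hx1 : x < 1 := by
    have : x < 1 * 1 := by
      apply mul_lt_mul' (le_of_lt (hrR.trans hR)) hμ1 hμ0.le one_pos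
    linarith
  have hm1 : (1:ℝ) ≤ (m:ℝ) := by exact_mod_cast hm
  have hmpos : (0:ℝ) < m := by linarith
  have hbase0 : 0 < (1 - x) / m := div_pos (by linarith) hmpos
  have hbase1 : (1 - x) / m < 1 := by
    rw [div_lt_one hmpos]; linarith
  have hδ0 : 0 < δ := by rw [hδ]; exact Real.rpow_pos_of_pos hbase0 _
  have hδ1 : δ < 1 := by
    rw [hδ]; exact Real.rpow_lt_one hbase0.le hbase1 (by positivity)
  have hlogδ : Real.log δ = (1 / x) * Real.log ((1 - x) / m) := by
    rw [hδ, Real.log_rpow hbase0]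
  have hlog1μ : 0 < Real.log (1 + μ) := Real.log_pos (by linarith)
  have hL : 0 < Real.log (1 / δ) := Real.log_pos (by rw [lt_div_iff₀ hδ0, one_mul]; exact hδ1)
  have hlog1δ : Real.log (1 / δ) = -Real.log δ := by rw [one_div, Real.log_inv]
  constructor
  · intro N hN hN2
    have hpow : (0:ℝ) < (1 + μ) ^ (N / w) := Real.rpow_pos_of_pos (by linarith) _
    have := Real.log_le_log (by positivity) hN2
    rw [Real.log_mul hδ0.ne' hpow.ne', Real.log_rpow (by linarith), Real.log_one] at this
    have h2 : N / w * Real.log (1 + μ) ≤ Real.log (1 / δ) := by rw [hlog1δ]; linarith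
    have h3 : N / w ≤ Real.log (1 / δ) / Real.log (1 + μ) :=
      (le_div_iff₀ hlog1μ).mpr h2
    calc N = w * (N / w) := by field_simp
    _ ≤ w * (Real.log (1 / δ) / Real.log (1 + μ)) := by
        exact mul_le_mul_of_nonneg_left h3 hw.le
  · -- main parameter inequality
    have hLdef : Real.log (1 / δ) = (1 / x) * (Real.log m - Real.log (1 - x)) := by
      rw [hlog1δ, hlogδ, Real.log_div (by linarith) hmpos.ne']
      ring
    have hLpos : 0 < Real.log m - Real.log (1 - x) := by
      have h1 : Real.log (1 - x) < 0 := Real.log_neg (by linarith) (by linarith)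
      have h2 : 0 ≤ Real.log m := Real.log_nonneg hm1
      linarith
    set L := Real.log m - Real.log (1 - x) with hLd
    -- t lower bound
    have hy : (1 - x) / x * Real.log ((1 - x) / (m * δ)) = (1 - x) ^ 2 / x ^ 2 * L := by
      rw [Real.log_div (by linarith) (mul_pos hmpos hδ0).ne', Real.log_mul hmpos.ne' hδ0.ne', hlogδ,
        Real.log_div (show (0:ℝ) < 1 - x by linarith).ne' hmpos.ne']
      field_simp
      ring
    have htlb : (1 - x) ^ 2 / x ^ 2 * L ≤ (t : ℝ) := by
      rw [← hy, ht]
      push_cast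
      exact (Nat.lt_floor_add_one _).le
    -- key: x ≤ R * (1-x)^2 * log(1+μ)
    have hlog_lb : μ * (1 - μ) ≤ Real.log (1 + μ) := by
      have h1 : 1 - (1 + μ)⁻¹ ≤ Real.log (1 + μ) :=
        Real.one_sub_inv_le_log_of_pos (by linarith)
      have h2 : μ * (1 - μ) ≤ 1 - (1 + μ)⁻¹ := by
        rw [inv_eq_one_div]
        rw [show (1:ℝ) - 1 / (1 + μ) = μ / (1 + μ) by field_simp; ring]
        rw [le_div_iff₀ (by linarith : (0:ℝ) < 1 + μ)]
        nlinarith [mul_pos (mul_pos hμ0 hμ0) hμ0]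
      linarith
    have hrRc : r = R * (1 - μ) ^ 3 := by
      rw [hcube]; field_simp
    have hkey : x ≤ R * (1 - x) ^ 2 * Real.log (1 + μ) := by
      have hxμ : x ≤ μ := by
        have h := mul_le_mul_of_nonneg_right (show r ≤ 1 by linarith) hμ0.le
        rw [one_mul] at h
        calc x = r * μ := hxdef
        _ ≤ μ := h
      have h1x : 1 - μ ≤ 1 - x := by linarith
      have hsq : (1 - μ) ^ 2 ≤ (1 - x) ^ 2 := by
        apply pow_le_pow_left₀ (by linarith) h1x
      have hstep : R * (1 - μ) ^ 2 * (μ * (1 - μ)) ≤ R * (1 - x) ^ 2 * Real.log (1 + μ) := by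
        apply mul_le_mul
        · exact mul_le_mul_of_nonneg_left hsq hR0.le
        · exact hlog_lb
        · exact mul_nonneg hμ0.le (by linarith)
        · have : (0:ℝ) ≤ (1 - x) ^ 2 := sq_nonneg _
          nlinarith
      calc x = r * μ := rfl
      _ = R * (1 - μ) ^ 2 * (μ * (1 - μ)) := by rw [hrRc]; ring
      _ ≤ _ := hstep
    -- conclude
    have hmain : Real.log (1 / δ) / Real.log (1 + μ) ≤ (t : ℝ) * R := by
      rw [div_le_iff₀ hlog1μ, hLdef]
      have hfac : (1:ℝ) ≤ (R * (1 - x) ^ 2 * Real.log (1 + μ)) / x :=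
        (one_le_div hx0).mpr hkey
      have step : (1 / x) * L ≤ ((1 - x) ^ 2 / x ^ 2 * L * R) * Real.log (1 + μ) := by
        have h2 := le_mul_of_one_le_right
          (mul_nonneg (by positivity : (0:ℝ) ≤ 1 / x) hLpos.le) hfac
        calc 1 / x * L ≤ 1 / x * L * ((R * (1 - x) ^ 2 * Real.log (1 + μ)) / x) := h2
        _ = ((1 - x) ^ 2 / x ^ 2 * L * R) * Real.log (1 + μ) := by
            field_simp
      refine step.trans ?_
      have hRt : (1 - x) ^ 2 / x ^ 2 * L * R ≤ (t:ℝ) * R :=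
        mul_le_mul_of_nonneg_right htlb hR0.le
      exact mul_le_mul_of_nonneg_right hRt hlog1μ.le
    calc w * (Real.log (1 / δ) / Real.log (1 + μ)) ≤ w * ((t : ℝ) * R) :=
      mul_le_mul_of_nonneg_left hmain hw.le
    _ = w * t * R := by ring
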